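/- Let X, Y be Hilbert spaces, T : X → Y a compact injective linear operator, and for λ > 0 set R_λ := (T*T + λI)^{-1} T*T. Then for every h ∈ X, ‖R_λ h − h‖ → 0 as λ → 0⁺. -/

import Mathlib

/-- If `T : X → Y` is a compact injective operator between Hilbert spaces and,
for `λ > 0`, `R_λ = (T*T + λI)⁻¹ T*T`, then for every `h`, `‖R_λ h − h‖ → 0` as `λ → 0⁺`.
The inverses are encoded by a family `J` of continuous linear equivalences. -/
theorem stmt4 {X Y : Type*} [NormedAddCommGroup X] [InnerProductSpace ℝ X] [CompleteSpace X]
    [NormedAddCommGroup Y] [InnerProductSpace ℝ Y] [CompleteSpace Y]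
    (T : X →L[ℝ] Y) (hT : IsCompactOperator (T : X →L[ℝ] Y))
    (hinj : Function.Injective T)
    (J : ℝ → (X ≃L[ℝ] X))
    (hJ : ∀ lam ∈ Set.Ioi (0 : ℝ),
      ((J lam : X →L[ℝ] X)) =
        (ContinuousLinearMap.adjoint T).comp T + lam • (1 : X →L[ℝ] X)) :
    ∀ h : X,
      Filter.Tendsto
        (fun lam : ℝ => ‖(J lam).symm (((ContinuousLinearMap.adjoint T).comp T) h) - h‖)
        (nhdsWithin 0 (Set.Ioi 0)) (nhds 0) := by
  classical
  set A : X →L[ℝ] X := (ContinuousLinearMap.adjoint T).comp T with hA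
  have hAinner : ∀ x : X, (inner ℝ (A x) x : ℝ) = ‖T x‖ ^ 2 := by
    intro x
    have : (inner ℝ (A x) x : ℝ) = inner ℝ (T x) (T x) := by
      simp [hA, ContinuousLinearMap.adjoint_inner_left]
    rw [this, real_inner_self_eq_norm_sq]
  have hpos : ∀ x : X, (0 : ℝ) ≤ inner ℝ (A x) x := by
    intro x; rw [hAinner]; positivity
  have hlow : ∀ lam : ℝ, 0 < lam → ∀ x : X, lam * ‖x‖ ≤ ‖A x + lam • x‖ := by
    intro lam hlam x
    rcases eq_or_ne x 0 with rfl | hx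
    · simp
    have hxpos : 0 < ‖x‖ := norm_pos_iff.mpr hx
    have h1 : lam * ‖x‖ * ‖x‖ ≤ inner ℝ (A x + lam • x) x := by
      rw [inner_add_left, real_inner_smul_left, real_inner_self_eq_norm_sq]
      nlinarith [hpos x]
    have h2 : (inner ℝ (A x + lam • x) x : ℝ) ≤ ‖A x + lam • x‖ * ‖x‖ :=
      real_inner_le_norm _ _
    exact le_of_mul_le_mul_right (h1.trans h2) hxpos
  have hJapp : ∀ lam ∈ Set.Ioi (0 : ℝ), ∀ x : X, (J lam) x = A x + lam • x := by
    intro lam hlam x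
    have h1 : ((J lam : X →L[ℝ] X)) x = (A + lam • (1 : X →L[ℝ] X)) x := by
      rw [hJ lam hlam]
    simpa using h1
  have hsymm_bound : ∀ lam ∈ Set.Ioi (0 : ℝ), ∀ y : X,
      lam * ‖(J lam).symm y‖ ≤ ‖y‖ := by
    intro lam hlam y
    have := hlow lam hlam ((J lam).symm y)
    rwa [← hJapp lam hlam, (J lam).apply_symm_apply] at this
  have hid : ∀ lam ∈ Set.Ioi (0 : ℝ), ∀ x : X,
      (J lam).symm (A x) - x = -(lam • (J lam).symm x) := by
    intro lam hlam x
    apply (J lam).injective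
    rw [map_sub, map_neg, map_smul, (J lam).apply_symm_apply, (J lam).apply_symm_apply,
      hJapp lam hlam x]
    abel
  -- density of range A
  have hdense : (LinearMap.range (A : X →ₗ[ℝ] X)).topologicalClosure = ⊤ := by
    rw [Submodule.topologicalClosure_eq_top_iff, Submodule.eq_bot_iff]
    intro x hx
    have h0 : (inner ℝ (A x) x : ℝ) = 0 := hx (A x) ⟨x, rfl⟩
    rw [hAinner] at h0
    have : T x = 0 := by
      have : ‖T x‖ = 0 := by nlinarith [norm_nonneg (T x)]
      exact norm_eq_zero.mp this
    exact hinj (by simpa using this)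
  have happrox : ∀ x : X, ∀ ε : ℝ, 0 < ε → ∃ g : X, ‖A g - x‖ < ε := by
    intro x ε hε
    have hx : x ∈ closure ((LinearMap.range (A : X →ₗ[ℝ] X)) : Set X) := by
      have : x ∈ (LinearMap.range (A : X →ₗ[ℝ] X)).topologicalClosure := by
        rw [hdense]; trivial
      exact this
    rw [Metric.mem_closure_iff] at hx
    obtain ⟨y, hy, hdy⟩ := hx ε hε
    obtain ⟨g, rfl⟩ := hy
    exact ⟨g, by rwa [← dist_eq_norm, dist_comm]⟩
  intro h
  rw [Metric.tendsto_nhdsWithin_nhds]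
  intro ε hε
  obtain ⟨g, hg⟩ := happrox h (ε / 2) (by linarith)
  refine ⟨ε / (4 * (‖g‖ + 1)), by positivity, ?_⟩
  intro lam hlam hdist
  have hlam' : (0 : ℝ) < lam := hlam
  rw [Real.dist_eq, sub_zero, abs_of_pos hlam'] at hdist
  have e1 : ‖(J lam).symm (A h) - h‖ = lam * ‖(J lam).symm h‖ := by
    rw [hid lam hlam h, norm_neg, norm_smul, Real.norm_of_nonneg hlam'.le]
  have hsplit : (J lam).symm h = (J lam).symm (h - A g) + (J lam).symm (A g) := by
    rw [← map_add, sub_add_cancel]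
  have b2 : lam * ‖(J lam).symm (h - A g)‖ ≤ ‖h - A g‖ := hsymm_bound lam hlam _
  have b3 : ‖(J lam).symm (A g)‖ ≤ 2 * ‖g‖ := by
    have e : (J lam).symm (A g) = g - lam • (J lam).symm g := by
      have := hid lam hlam g
      have : (J lam).symm (A g) = g + -(lam • (J lam).symm g) := by
        rw [← this]; abel
      rw [this]; abel_nf
    rw [e]
    calc ‖g - lam • (J lam).symm g‖ ≤ ‖g‖ + ‖lam • (J lam).symm g‖ := norm_sub_le _ _
      _ ≤ ‖g‖ + ‖g‖ := by
          gcongr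
          rw [norm_smul, Real.norm_of_nonneg hlam'.le]
          exact hsymm_bound lam hlam g
      _ = 2 * ‖g‖ := by ring
  have btot : lam * ‖(J lam).symm h‖ ≤ ‖h - A g‖ + lam * (2 * ‖g‖) := by
    rw [hsplit]
    calc lam * ‖(J lam).symm (h - A g) + (J lam).symm (A g)‖
        ≤ lam * (‖(J lam).symm (h - A g)‖ + ‖(J lam).symm (A g)‖) := by
          gcongr; exact norm_add_le _ _
      _ = lam * ‖(J lam).symm (h - A g)‖ + lam * ‖(J lam).symm (A g)‖ := by ring
      _ ≤ ‖h - A g‖ + lam * (2 * ‖g‖) :=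
          add_le_add (hsymm_bound lam hlam _) (mul_le_mul_of_nonneg_left b3 hlam'.le)
  have hAg : ‖h - A g‖ < ε / 2 := by rwa [norm_sub_rev]
  have hsmall : lam * (2 * ‖g‖) < ε / 2 := by
    have hg1 : (0 : ℝ) < ‖g‖ + 1 := by positivity
    have : lam * (2 * ‖g‖) ≤ lam * (2 * (‖g‖ + 1)) := by nlinarith [hlam'.le]
    have h2 : lam * (2 * (‖g‖ + 1)) < (ε / (4 * (‖g‖ + 1))) * (2 * (‖g‖ + 1)) := by
      have : (0:ℝ) < 2 * (‖g‖ + 1) := by positivity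
      exact mul_lt_mul_of_pos_right hdist this
    have h3 : (ε / (4 * (‖g‖ + 1))) * (2 * (‖g‖ + 1)) = ε / 2 := by
      field_simp; ring
    linarith
  rw [Real.dist_eq, sub_zero]
  have hnn : (0:ℝ) ≤ ‖(J lam).symm (A h) - h‖ := norm_nonneg _
  rw [abs_of_nonneg hnn, e1]
  linarith
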